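/- Let m ≥ 2 and let L : {0,…,m−1} × {0,…,m−1} → {0,…,m−1} be a Latin square of order m, i.e., for every i the map j ↦ L(i,j) is a bijection and for every j the map i ↦ L(i,j) is a bijection. Suppose L has no proper subsquare: there are no sets R, C, S ⊆ {0,…,m−1} with 2 ≤ |R| = |C| = |S| < m such that L(i,j) ∈ S for all i ∈ R and j ∈ C. Let V be the disjoint union of three copies U = {u₀,…,u_{m−1}}, W = {w₀,…,w_{m−1}}, X = {x₀,…,x_{m−1}} of {0,…,m−1}, and let T = { {u_i, w_j, x_{L(i,j)}} : 0 ≤ i, j ≤ m−1 }. Then T is a weakly spreading linear triple system on the 3m-element set V with m² triples. -/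

import Mathlib

open Finset

variable {α : Type*}

/-- A pair of (distinct) vertices is covered if it lies in some triple of `F`. -/
def Covered [DecidableEq α] (F : Finset (Finset α)) (x y : α) : Prop :=
  ∃ T ∈ F, x ∈ T ∧ y ∈ T

instance [DecidableEq α] (F : Finset (Finset α)) (x y : α) : Decidable (Covered F x y) :=
  inferInstanceAs (Decidable (∃ T ∈ F, x ∈ T ∧ y ∈ T))

/-- Linear triple system on `V`. -/
def IsLinearTS [DecidableEq α] (V : Finset α) (F : Finset (Finset α)) : Prop :=
  (∀ T ∈ F, T ⊆ V ∧ T.card = 3) ∧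
    ∀ x ∈ V, ∀ y ∈ V, x ≠ y → (F.filter fun T => x ∈ T ∧ y ∈ T).card ≤ 1

/-- Steiner triple system on `V`. -/
def IsSTS [DecidableEq α] (V : Finset α) (F : Finset (Finset α)) : Prop :=
  (∀ T ∈ F, T ⊆ V ∧ T.card = 3) ∧
    ∀ x ∈ V, ∀ y ∈ V, x ≠ y → (F.filter fun T => x ∈ T ∧ y ∈ T).card = 1

/-- Neighbourhood of `V'` with respect to the triple system `F` on `V`. -/
def nbhd [DecidableEq α] (V : Finset α) (F : Finset (Finset α)) (V' : Finset α) : Finset α :=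
  (V \ V').filter fun z => ∃ x ∈ V', ∃ y ∈ V', x ≠ y ∧ ({x, y, z} : Finset α) ∈ F

/-- `F` is spreading: the closure of every nontrivial subset is `V`. -/
def IsSpreading [DecidableEq α] (V : Finset α) (F : Finset (Finset α)) : Prop :=
  ∀ V' ⊆ V, 3 ≤ V'.card → V' ∉ F →
    ∀ W, V' ⊆ W → W ⊆ V → nbhd V F W = ∅ → W = V

/-- `F` is weakly spreading. -/
def IsWeaklySpreading [DecidableEq α] (V : Finset α) (F : Finset (Finset α)) : Prop :=
  ∀ F' ⊆ F, 2 ≤ F'.card →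
    ∀ W, F'.biUnion id ⊆ W → W ⊆ V → nbhd V F W = ∅ → W = V

/-- `Val(T)`: number of private neighbours of the triple `T`. -/
def valT [DecidableEq α] (V : Finset α) (F : Finset (Finset α)) (T : Finset α) : ℕ :=
  ((V \ T).filter fun v => (T.filter fun t => Covered F v t).card = 1).card

/-- Two triples are adjacent if pairs of each span a `C₄` in the complement of the skeleton. -/
def AdjT [DecidableEq α] (F : Finset (Finset α)) (T T' : Finset α) : Prop :=
  ∃ v₁ ∈ T, ∃ v₂ ∈ T, ∃ u₁ ∈ T', ∃ u₂ ∈ T',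
    v₁ ≠ v₂ ∧ u₁ ≠ u₂ ∧ v₁ ≠ u₁ ∧ v₁ ≠ u₂ ∧ v₂ ≠ u₁ ∧ v₂ ≠ u₂ ∧
    ¬Covered F v₁ u₁ ∧ ¬Covered F u₁ v₂ ∧ ¬Covered F v₂ u₂ ∧ ¬Covered F u₂ v₁

instance [DecidableEq α] (F : Finset (Finset α)) (T T' : Finset α) : Decidable (AdjT F T T') :=
  inferInstanceAs (Decidable (∃ v₁ ∈ T, ∃ v₂ ∈ T, ∃ u₁ ∈ T', ∃ u₂ ∈ T',
    v₁ ≠ v₂ ∧ u₁ ≠ u₂ ∧ v₁ ≠ u₁ ∧ v₁ ≠ u₂ ∧ v₂ ≠ u₁ ∧ v₂ ≠ u₂ ∧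
    ¬Covered F v₁ u₁ ∧ ¬Covered F u₁ v₂ ∧ ¬Covered F v₂ u₂ ∧ ¬Covered F u₂ v₁))

section Helpers
variable {m : ℕ} (L : Fin m → Fin m → Fin m)

def trip (p : Fin m × Fin m) : Finset (Fin m ⊕ Fin m ⊕ Fin m) :=
  {Sum.inl p.1, Sum.inr (Sum.inl p.2), Sum.inr (Sum.inr (L p.1 p.2))}

lemma mem_trip (x : Fin m ⊕ Fin m ⊕ Fin m) (p : Fin m × Fin m) :
    x ∈ trip L p ↔ x = Sum.inl p.1 ∨ x = Sum.inr (Sum.inl p.2) ∨ x = Sum.inr (Sum.inr (L p.1 p.2)) := by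
  simp [trip]

lemma trip_card (p : Fin m × Fin m) : (trip L p).card = 3 := by
  rw [trip, Finset.card_insert_of_notMem (by simp), Finset.card_insert_of_notMem (by simp),
    Finset.card_singleton]

lemma trip_share (hrow : ∀ i, Function.Bijective (L i))
    (hcol : ∀ j, Function.Bijective fun i => L i j)
    (p q : Fin m × Fin m) (x y : Fin m ⊕ Fin m ⊕ Fin m) (hxy : x ≠ y)
    (hxp : x ∈ trip L p) (hyp : y ∈ trip L p) (hxq : x ∈ trip L q) (hyq : y ∈ trip L q) :
    p = q := by
  obtain ⟨i, j⟩ := p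
  obtain ⟨i', j'⟩ := q
  rw [mem_trip] at hxp hyp hxq hyq
  simp only at hxp hyp hxq hyq
  rcases hxp with h1|h1|h1 <;> rcases hyp with h2|h2|h2 <;> subst h1 <;> subst h2 <;>
    simp only [Sum.inl.injEq, Sum.inr.injEq, reduceCtorEq, false_or, or_false, ne_eq,
      not_true_eq_false] at hxq hyq hxy
  · exact Prod.ext hxq hyq
  · subst hxq
    exact Prod.ext rfl ((hrow _).injective hyq)
  · exact Prod.ext hyq hxq
  · subst hxq
    exact Prod.ext ((hcol _).injective hyq) rfl
  · subst hyq
    exact Prod.ext rfl ((hrow _).injective hxq)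
  · subst hyq
    exact Prod.ext ((hcol _).injective hxq) rfl

lemma trip_injective (hrow : ∀ i, Function.Bijective (L i))
    (hcol : ∀ j, Function.Bijective fun i => L i j) :
    Function.Injective (trip L) := by
  intro p q h
  refine trip_share L hrow hcol p q (Sum.inl p.1) (Sum.inr (Sum.inl p.2)) (by simp)
    (by simp [mem_trip]) (by simp [mem_trip]) ?_ ?_
  · rw [← h]; simp [mem_trip]
  · rw [← h]; simp [mem_trip]

end Helpers

/-- The triple system obtained from a subsquare-free Latin square of
order `m ≥ 2` on the disjoint union of three copies of `{0,…,m-1}` is a weakly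
spreading linear triple system on `3m` vertices with `m²` triples. -/
theorem statement_18 (m : ℕ) (hm : 2 ≤ m) (L : Fin m → Fin m → Fin m)
    (hrow : ∀ i, Function.Bijective (L i))
    (hcol : ∀ j, Function.Bijective fun i => L i j)
    (hsub : ¬∃ R C S : Finset (Fin m), 2 ≤ R.card ∧ R.card = C.card ∧ C.card = S.card ∧
        S.card < m ∧ ∀ i ∈ R, ∀ j ∈ C, L i j ∈ S)
    (V : Finset (Fin m ⊕ Fin m ⊕ Fin m)) (hV : V = Finset.univ)
    (T : Finset (Finset (Fin m ⊕ Fin m ⊕ Fin m)))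
    (hT : T = Finset.image (fun p : Fin m × Fin m =>
      ({Sum.inl p.1, Sum.inr (Sum.inl p.2), Sum.inr (Sum.inr (L p.1 p.2))} :
        Finset (Fin m ⊕ Fin m ⊕ Fin m))) Finset.univ) :
    V.card = 3 * m ∧ T.card = m ^ 2 ∧ IsLinearTS V T ∧ IsWeaklySpreading V T := by
  subst hV
  have hT' : T = Finset.image (trip L) Finset.univ := hT
  clear hT
  subst hT'
  have memT : ∀ t, t ∈ Finset.image (trip L) (Finset.univ : Finset (Fin m × Fin m)) ↔
      ∃ p, trip L p = t := by
    intro t; simp [Finset.mem_image]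
  refine ⟨?_, ?_, ?_, ?_⟩
  · simp [Finset.card_univ]; ring
  · rw [Finset.card_image_of_injective _ (trip_injective L hrow hcol)]
    simp [Finset.card_univ]; ring
  · constructor
    · intro t ht
      obtain ⟨p, rfl⟩ := (memT t).mp ht
      exact ⟨Finset.subset_univ _, trip_card L p⟩
    · intro x _ y _ hxy
      rw [Finset.card_le_one]
      intro a ha b hb
      rw [Finset.mem_filter] at ha hb
      obtain ⟨p, rfl⟩ := (memT a).mp ha.1
      obtain ⟨q, rfl⟩ := (memT b).mp hb.1
      exact congrArg (trip L)
        (trip_share L hrow hcol p q x y hxy ha.2.1 ha.2.2 hb.2.1 hb.2.2)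
  · intro F' hF'T hF'2 W hFW hWV hnb
    set TT := Finset.image (trip L) (Finset.univ : Finset (Fin m × Fin m)) with hTT
    -- closure property
    have hclosed : ∀ x ∈ W, ∀ y ∈ W, x ≠ y →
        ∀ z, ({x, y, z} : Finset (Fin m ⊕ Fin m ⊕ Fin m)) ∈ TT → z ∈ W := by
      intro x hx y hy hxy z hz
      by_contra hzW
      have : z ∈ nbhd Finset.univ TT W := by
        rw [nbhd, Finset.mem_filter, Finset.mem_sdiff]
        exact ⟨⟨Finset.mem_univ _, hzW⟩, x, hx, y, hy, hxy, hz⟩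
      rw [hnb] at this
      exact absurd this (Finset.notMem_empty _)
    have tripmem : ∀ p : Fin m × Fin m, trip L p ∈ TT :=
      fun p => Finset.mem_image.mpr ⟨p, Finset.mem_univ _, rfl⟩
    have h1 : ∀ i j, Sum.inl i ∈ W → Sum.inr (Sum.inl j) ∈ W →
        (Sum.inr (Sum.inr (L i j)) : Fin m ⊕ Fin m ⊕ Fin m) ∈ W := by
      intro i j hi hj
      exact hclosed _ hi _ hj (by simp) _ (tripmem (i, j))
    have h2 : ∀ i j, Sum.inl i ∈ W → Sum.inr (Sum.inr (L i j)) ∈ W →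
        (Sum.inr (Sum.inl j) : Fin m ⊕ Fin m ⊕ Fin m) ∈ W := by
      intro i j hi hk
      refine hclosed _ hi _ hk (by simp) _ ?_
      have : ({Sum.inl i, Sum.inr (Sum.inr (L i j)), Sum.inr (Sum.inl j)} :
          Finset (Fin m ⊕ Fin m ⊕ Fin m)) = trip L (i, j) := by
        ext x; simp [trip]; tauto
      rw [this]; exact tripmem (i, j)
    have h3 : ∀ i j, Sum.inr (Sum.inl j) ∈ W → Sum.inr (Sum.inr (L i j)) ∈ W →
        (Sum.inl i : Fin m ⊕ Fin m ⊕ Fin m) ∈ W := by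
      intro i j hj hk
      refine hclosed _ hj _ hk (by simp) _ ?_
      have : ({Sum.inr (Sum.inl j), Sum.inr (Sum.inr (L i j)), Sum.inl i} :
          Finset (Fin m ⊕ Fin m ⊕ Fin m)) = trip L (i, j) := by
        ext x; simp [trip]; tauto
      rw [this]; exact tripmem (i, j)
    set R : Finset (Fin m) := Finset.univ.filter (fun i => Sum.inl i ∈ W) with hR
    set C : Finset (Fin m) := Finset.univ.filter (fun j => Sum.inr (Sum.inl j) ∈ W) with hC
    set S : Finset (Fin m) := Finset.univ.filter
      (fun k => (Sum.inr (Sum.inr k) : Fin m ⊕ Fin m ⊕ Fin m) ∈ W) with hS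
    have memR : ∀ i, i ∈ R ↔ Sum.inl i ∈ W := by intro i; simp [hR]
    have memC : ∀ j, j ∈ C ↔ Sum.inr (Sum.inl j) ∈ W := by intro j; simp [hC]
    have memS : ∀ k, k ∈ S ↔ (Sum.inr (Sum.inr k) : Fin m ⊕ Fin m ⊕ Fin m) ∈ W := by
      intro k; simp [hS]
    -- two distinct cells
    obtain ⟨t1, ht1, t2, ht2, hne⟩ := Finset.one_lt_card.mp hF'2
    obtain ⟨p, rfl⟩ := (memT t1).mp (hF'T ht1)
    obtain ⟨q, rfl⟩ := (memT t2).mp (hF'T ht2)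
    have hpq : p ≠ q := fun h => hne (by rw [h])
    have hsubW : ∀ t ∈ F', ∀ x ∈ t, x ∈ W := by
      intro t ht x hx
      exact hFW (Finset.mem_biUnion.mpr ⟨t, ht, hx⟩)
    have hup : Sum.inl p.1 ∈ W := hsubW _ ht1 _ (by simp [trip])
    have huq : Sum.inl q.1 ∈ W := hsubW _ ht2 _ (by simp [trip])
    have hwp : (Sum.inr (Sum.inl p.2) : Fin m ⊕ Fin m ⊕ Fin m) ∈ W :=
      hsubW _ ht1 _ (by simp [trip])
    have hwq : (Sum.inr (Sum.inl q.2) : Fin m ⊕ Fin m ⊕ Fin m) ∈ W :=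
      hsubW _ ht2 _ (by simp [trip])
    have hi0 : p.1 ∈ R := (memR _).mpr hup
    have hj0 : p.2 ∈ C := (memC _).mpr hwp
    -- card C = card S
    have hRCtoS : ∀ i ∈ R, ∀ j ∈ C, L i j ∈ S := by
      intro i hi j hj
      exact (memS _).mpr (h1 i j ((memR i).mp hi) ((memC j).mp hj))
    have hCS : C.card = S.card := by
      refine le_antisymm ?_ ?_
      · exact Finset.card_le_card_of_injOn (fun j => L p.1 j)
          (fun j hj => hRCtoS _ hi0 _ hj)
          (fun a _ b _ h => (hrow p.1).injective h)
      · set e := Equiv.ofBijective _ (hrow p.1) with he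
        refine Finset.card_le_card_of_injOn (fun s => e.symm s) ?_
          (fun a _ b _ h => e.symm.injective h)
        intro s hs
        rw [Finset.mem_coe, memC]
        have : L p.1 (e.symm s) = s := e.apply_symm_apply s
        exact h2 p.1 (e.symm s) hup (by rw [this]; exact (memS s).mp hs)
    have hRS : R.card = S.card := by
      refine le_antisymm ?_ ?_
      · exact Finset.card_le_card_of_injOn (fun i => L i p.2)
          (fun i hi => hRCtoS _ hi _ hj0)
          (fun a _ b _ h => (hcol p.2).injective h)
      · set e := Equiv.ofBijective _ (hcol p.2) with he
        refine Finset.card_le_card_of_injOn (fun s => e.symm s) ?_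
          (fun a _ b _ h => e.symm.injective h)
        intro s hs
        rw [Finset.mem_coe, memR]
        have : L (e.symm s) p.2 = s := e.apply_symm_apply s
        exact h3 (e.symm s) p.2 hwp (by rw [this]; exact (memS s).mp hs)
    -- 2 ≤ card S
    have hS2 : 2 ≤ S.card := by
      by_cases h : p.1 = q.1
      · have h2' : p.2 ≠ q.2 := fun h' => hpq (Prod.ext h h')
        refine Finset.one_lt_card.mpr ⟨L p.1 p.2, hRCtoS _ hi0 _ hj0,
          L p.1 q.2, hRCtoS _ hi0 _ ((memC _).mpr hwq), ?_⟩
        exact fun hh => h2' ((hrow p.1).injective hh)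
      · refine Finset.one_lt_card.mpr ⟨L p.1 p.2, hRCtoS _ hi0 _ hj0,
          L q.1 p.2, hRCtoS _ ((memR _).mpr huq) _ hj0, ?_⟩
        exact fun hh => h ((hcol p.2).injective hh)
    -- subsquare-free forces S = univ
    have hSm : ¬ S.card < m := by
      intro hlt
      exact hsub ⟨R, C, S, by omega, by omega, hCS, hlt, hRCtoS⟩
    have hSle : S.card ≤ m := le_trans (Finset.card_le_univ S) (by simp)
    have hScard : S.card = m := by omega
    have hSu : S = Finset.univ := Finset.eq_univ_of_card S (by simp [hScard])
    have hRu : R = Finset.univ := Finset.eq_univ_of_card R (by simp [hRS, hScard])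
    have hCu : C = Finset.univ := Finset.eq_univ_of_card C (by simp [hCS, hScard])
    apply Finset.eq_univ_of_forall
    intro v
    rcases v with i | j | k
    · exact (memR i).mp (hRu ▸ Finset.mem_univ i)
    · exact (memC j).mp (hCu ▸ Finset.mem_univ j)
    · exact (memS k).mp (hSu ▸ Finset.mem_univ k)
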